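/- arXiv:2405.04951 — 2 statements merged into one kernel-verified Lean document; each statement's English description precedes it below -/
import Mathlib

section
/- For every real m ≥ 1 and every x > 0, we have x·φ_m'(x) = x e^{-x} ∑_{j=0}^∞ x^j/(j!(m+j)) ≤ 1 - e^{-x} < 1. -/
open Real MeasureTheory Filter ProbabilityTheory

/-- The digamma function psi(x) = Gamma'(x)/Gamma(x). -/
noncomputable def psi (x : ℝ) : ℝ := deriv Real.Gamma x / Real.Gamma x

/-- phi_m(x) = e^{-x} * sum_j (x^j/j!) psi(j+m). -/
noncomputable def phi (m x : ℝ) : ℝ :=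
  Real.exp (-x) * ∑' j : ℕ, x ^ j / (Nat.factorial j : ℝ) * psi (j + m)

lemma psi_ne_neg_nat {s : ℝ} (hs : 0 < s) : ∀ k : ℕ, s ≠ -k := by
  intro k
  have : (0:ℝ) ≤ (k : ℝ) := Nat.cast_nonneg k
  intro h
  nlinarith

lemma psi_rec (y : ℝ) (hy : 0 < y) : psi (y + 1) = psi y + 1 / y := by
  have h1 : HasDerivAt Real.Gamma (deriv Real.Gamma y) y :=
    (Real.differentiableAt_Gamma (psi_ne_neg_nat hy)).hasDerivAt
  have h2 : HasDerivAt (fun z => Real.Gamma (z + 1)) (deriv Real.Gamma (y + 1)) y := by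
    have := ((Real.differentiableAt_Gamma
        (psi_ne_neg_nat (by linarith : (0:ℝ) < y + 1))).hasDerivAt).comp y
      ((hasDerivAt_id y).add_const 1)
    simpa [Function.comp_def] using this
  have h3 : HasDerivAt (fun z => z * Real.Gamma z)
      (1 * Real.Gamma y + y * deriv Real.Gamma y) y := (hasDerivAt_id y).mul h1
  have heq : (fun z => Real.Gamma (z + 1)) =ᶠ[nhds y] (fun z => z * Real.Gamma z) := by
    filter_upwards [eventually_ne_nhds hy.ne'] with z hz
    exact Real.Gamma_add_one hz
  have h4 : HasDerivAt (fun z => Real.Gamma (z + 1))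
      (1 * Real.Gamma y + y * deriv Real.Gamma y) y :=
    h3.congr_of_eventuallyEq heq
  have h5 : deriv Real.Gamma (y + 1) = Real.Gamma y + y * deriv Real.Gamma y := by
    have := h2.unique h4
    linarith [this]
  have hG : Real.Gamma y ≠ 0 := (Real.Gamma_pos_of_pos hy).ne'
  unfold psi
  rw [h5, Real.Gamma_add_one hy.ne']
  field_simp
  ring

lemma psi_abs (m : ℝ) (hm : 1 ≤ m) : ∀ j : ℕ, |psi ((j:ℝ) + m)| ≤ |psi m| + j := by
  intro j
  induction j with
  | zero => simp
  | succ k ih =>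
    have hk : (0:ℝ) < (k:ℝ) + m := by positivity
    have hrec := psi_rec ((k:ℝ) + m) hk
    have h1 : |1 / ((k:ℝ) + m)| ≤ 1 := by
      rw [abs_of_nonneg (by positivity)]
      rw [div_le_one hk]
      have : (0:ℝ) ≤ (k:ℝ) := Nat.cast_nonneg k
      linarith
    calc |psi (((k:ℕ)+1 : ℕ) + m)| = |psi ((k:ℝ) + m) + 1 / ((k:ℝ) + m)| := by
          rw [show (((k:ℕ)+1 : ℕ) : ℝ) + m = (k:ℝ) + m + 1 by push_cast; ring, hrec]
      _ ≤ |psi ((k:ℝ) + m)| + |1 / ((k:ℝ) + m)| := abs_add_le _ _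
      _ ≤ (|psi m| + k) + 1 := by linarith
      _ = |psi m| + ((k:ℕ)+1 : ℕ) := by push_cast; ring

lemma summable_aux (C R : ℝ) (hC : 0 ≤ C) (hR : 0 ≤ R) :
    Summable (fun j : ℕ => (C + j + 1) * (R ^ j / (Nat.factorial j : ℝ))) := by
  refine Summable.of_nonneg_of_le (fun j => by positivity) (fun j => ?_)
    ((Real.summable_pow_div_factorial (2*R)).mul_left (C+1))
  have h2 : (1:ℝ) ≤ 2 ^ j := one_le_pow₀ (by norm_num)
  have h3 : (j:ℝ) + 1 ≤ 2 ^ j := by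
    have h : j < 2 ^ j := Nat.lt_two_pow_self
    have h' : ((j:ℕ)+1 : ℕ) ≤ 2 ^ j := h
    exact_mod_cast h'
  have h1 : C + j + 1 ≤ (C+1) * 2 ^ j := by nlinarith
  calc (C + j + 1) * (R ^ j / (Nat.factorial j : ℝ))
      ≤ (C+1) * 2 ^ j * (R ^ j / (Nat.factorial j : ℝ)) := by
        apply mul_le_mul_of_nonneg_right h1 (by positivity)
    _ = (C+1) * ((2*R) ^ j / (Nat.factorial j : ℝ)) := by
        rw [mul_pow]; ring

theorem stmt2 (m : ℝ) (hm : 1 ≤ m) (x : ℝ) (hx : 0 < x) :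
    x * deriv (phi m) x
      = x * Real.exp (-x) * ∑' j : ℕ, x ^ j / ((Nat.factorial j : ℝ) * (m + j)) ∧
    x * Real.exp (-x) * ∑' j : ℕ, x ^ j / ((Nat.factorial j : ℝ) * (m + j))
      ≤ 1 - Real.exp (-x) ∧
    1 - Real.exp (-x) < 1 := by
  have hm0 : (0:ℝ) < m := by linarith
  set R : ℝ := x + 1 with hR
  have hRpos : (0:ℝ) < R := by linarith
  set g : ℕ → ℝ → ℝ := fun j y => y ^ j / (Nat.factorial j : ℝ) * psi (j + m) with hg_def
  set g' : ℕ → ℝ → ℝ := fun j y => ((j:ℝ) * y ^ (j-1) / (Nat.factorial j : ℝ)) * psi (j + m)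
    with hg'_def
  set u : ℕ → ℝ := fun j => ((j:ℝ) * R ^ (j-1) / (Nat.factorial j : ℝ)) * (|psi m| + j)
    with hu_def
  have hu : Summable u := by
    rw [← summable_nat_add_iff 1]
    refine (summable_aux (|psi m|) R (abs_nonneg _) hRpos.le).congr fun k => ?_
    simp only [hu_def]
    have hf : (0:ℝ) < (Nat.factorial k : ℝ) := by positivity
    rw [show (k+1)-1 = k from rfl, Nat.factorial_succ]
    push_cast
    field_simp
    ring
  have hg : ∀ j y, y ∈ Set.Ioo (-R) R → HasDerivAt (g j) (g' j y) y := by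
    intro j y _
    simpa [hg_def, hg'_def] using
      ((hasDerivAt_pow j y).div_const (Nat.factorial j : ℝ)).mul_const (psi (j + m))
  have hg' : ∀ j y, y ∈ Set.Ioo (-R) R → ‖g' j y‖ ≤ u j := by
    intro j y hy
    have hyR : |y| ≤ R := by
      rw [abs_le]; exact ⟨hy.1.le, hy.2.le⟩
    have h1 : ‖g' j y‖ = (j:ℝ) * |y| ^ (j-1) / (Nat.factorial j : ℝ) * |psi ((j:ℝ) + m)| := by
      simp only [hg'_def, Real.norm_eq_abs, abs_mul, abs_div, abs_pow, Nat.abs_cast]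
    rw [h1]
    have h2 := psi_abs m hm j
    have h3 : |y| ^ (j-1) ≤ R ^ (j-1) := pow_le_pow_left₀ (abs_nonneg _) hyR _
    have h4 : (0:ℝ) ≤ |psi m| + j := by positivity
    simp only [hu_def]
    gcongr
  have h0mem : (0:ℝ) ∈ Set.Ioo (-R) R := by
    constructor <;> simp [hR] <;> linarith
  have hxmem : x ∈ Set.Ioo (-R) R := by
    constructor <;> simp [hR] <;> linarith
  have hg0 : Summable (fun j => g j 0) := by
    apply summable_of_ne_finset_zero (s := {0})
    intro j hj
    simp only [Finset.mem_singleton] at hj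
    simp [hg_def, zero_pow hj]
  have hS : HasDerivAt (fun y => ∑' j : ℕ, g j y) (∑' j : ℕ, g' j x) x :=
    hasDerivAt_tsum_of_isPreconnected hu isOpen_Ioo isPreconnected_Ioo hg hg' h0mem hg0 hxmem
  have he : HasDerivAt (fun y => Real.exp (-y)) (-Real.exp (-x)) x := by
    simpa [Function.comp_def] using (Real.hasDerivAt_exp (-x)).comp x (hasDerivAt_neg x)
  have hphi : HasDerivAt (phi m)
      (-Real.exp (-x) * (∑' j : ℕ, g j x) + Real.exp (-x) * ∑' j : ℕ, g' j x) x := by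
    have := he.mul hS
    show HasDerivAt (fun y => Real.exp (-y) * ∑' j : ℕ, g j y) _ x
    simpa [phi, hg_def, Pi.mul_def] using this
  have hsumA : Summable (fun k : ℕ => x ^ k / (Nat.factorial k : ℝ) * psi ((k:ℝ) + m)) := by
    refine Summable.of_norm_bounded (summable_aux (|psi m|) x (abs_nonneg _) hx.le)
      fun k => ?_
    rw [Real.norm_eq_abs, abs_mul, abs_div, abs_pow, abs_of_nonneg hx.le, Nat.abs_cast]
    have h2 := psi_abs m hm k
    have h3 : (0:ℝ) ≤ x ^ k / (Nat.factorial k : ℝ) := by positivity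
    calc x ^ k / (Nat.factorial k : ℝ) * |psi ((k:ℝ) + m)|
        ≤ x ^ k / (Nat.factorial k : ℝ) * (|psi m| + k + 1) := by
          apply mul_le_mul_of_nonneg_left (by linarith) h3
      _ = (|psi m| + k + 1) * (x ^ k / (Nat.factorial k : ℝ)) := by ring
  have hsumB : Summable (fun k : ℕ => x ^ k / (Nat.factorial k : ℝ) * (1 / ((k:ℝ) + m))) := by
    refine Summable.of_nonneg_of_le (fun k => by positivity) (fun k => ?_)
      (Real.summable_pow_div_factorial x)
    have hk : (1:ℝ) ≤ (k:ℝ) + m := by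
      have : (0:ℝ) ≤ (k:ℝ) := Nat.cast_nonneg k
      linarith
    have hle1 : 1 / ((k:ℝ) + m) ≤ 1 := by
      rw [div_le_one (by linarith)]; linarith
    calc x ^ k / (Nat.factorial k : ℝ) * (1 / ((k:ℝ) + m))
        ≤ x ^ k / (Nat.factorial k : ℝ) * 1 :=
          mul_le_mul_of_nonneg_left hle1 (by positivity)
      _ = x ^ k / (Nat.factorial k : ℝ) := by ring
  have hg'sum : Summable (fun j => g' j x) :=
    Summable.of_norm_bounded hu fun j => hg' j x hxmem
  have hDkey : ∑' j : ℕ, g' j x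
      = (∑' j : ℕ, g j x) + ∑' k : ℕ, x ^ k / (Nat.factorial k : ℝ) * (1 / ((k:ℝ) + m)) := by
    rw [Summable.tsum_eq_zero_add hg'sum]
    have h0 : g' 0 x = 0 := by simp [hg'_def]
    have hterm : ∀ k : ℕ, g' (k+1) x
        = x ^ k / (Nat.factorial k : ℝ) * psi ((k:ℝ) + m)
          + x ^ k / (Nat.factorial k : ℝ) * (1 / ((k:ℝ) + m)) := by
      intro k
      have hkm : (0:ℝ) < (k:ℝ) + m := by positivity
      have hrec := psi_rec ((k:ℝ) + m) hkm
      simp only [hg'_def]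
      rw [show (k+1)-1 = k from rfl, Nat.factorial_succ]
      have hcast : (((k:ℕ)+1 : ℕ) : ℝ) + m = ((k:ℝ) + m) + 1 := by push_cast; ring
      rw [hcast, hrec]
      have hf : (0:ℝ) < (Nat.factorial k : ℝ) := by positivity
      push_cast
      field_simp
    rw [h0, zero_add]
    calc ∑' k : ℕ, g' (k+1) x
        = ∑' k : ℕ, (x ^ k / (Nat.factorial k : ℝ) * psi ((k:ℝ) + m)
          + x ^ k / (Nat.factorial k : ℝ) * (1 / ((k:ℝ) + m))) := tsum_congr hterm
      _ = _ := Summable.tsum_add hsumA hsumB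
  have hTeq : ∑' k : ℕ, x ^ k / (Nat.factorial k : ℝ) * (1 / ((k:ℝ) + m))
      = ∑' j : ℕ, x ^ j / ((Nat.factorial j : ℝ) * (m + j)) := by
    refine tsum_congr fun k => ?_
    rw [mul_one_div, div_div, add_comm (k:ℝ) m]
  have part1 : x * deriv (phi m) x
      = x * Real.exp (-x) * ∑' j : ℕ, x ^ j / ((Nat.factorial j : ℝ) * (m + j)) := by
    rw [hphi.deriv, hDkey, hTeq]
    ring
  have hsum1 : Summable (fun j : ℕ => x ^ j / ((Nat.factorial j : ℝ) * (m + j))) := by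
    refine Summable.of_nonneg_of_le (fun j => by positivity) (fun j => ?_)
      (Real.summable_pow_div_factorial x)
    have hj : (0:ℝ) ≤ (j:ℝ) := Nat.cast_nonneg j
    have hf : (0:ℝ) < (Nat.factorial j : ℝ) := by positivity
    have h1 : (Nat.factorial j : ℝ) ≤ (Nat.factorial j : ℝ) * (m + j) := by nlinarith
    gcongr
  have hsum2 : Summable (fun j : ℕ => x ^ j / (Nat.factorial (j+1) : ℝ)) := by
    refine Summable.of_nonneg_of_le (fun j => by positivity) (fun j => ?_)
      (Real.summable_pow_div_factorial x)
    gcongr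
    exact Nat.le_succ j
  have hle : ∑' j : ℕ, x ^ j / ((Nat.factorial j : ℝ) * (m + j))
      ≤ ∑' j : ℕ, x ^ j / (Nat.factorial (j+1) : ℝ) := by
    refine Summable.tsum_le_tsum (fun j => ?_) hsum1 hsum2
    have hf : (0:ℝ) < (Nat.factorial j : ℝ) := by positivity
    have hj : (0:ℝ) ≤ (j:ℝ) := Nat.cast_nonneg j
    have h1 : (Nat.factorial (j+1) : ℝ) ≤ (Nat.factorial j : ℝ) * (m + j) := by
      rw [Nat.factorial_succ]
      push_cast
      nlinarith
    gcongr
  have hexpsum : x * ∑' j : ℕ, x ^ j / (Nat.factorial (j+1) : ℝ) = Real.exp x - 1 := by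
    have hexps : Real.exp x = ∑' n : ℕ, x ^ n / (Nat.factorial n : ℝ) := by
      rw [Real.exp_eq_exp_ℝ, NormedSpace.exp_eq_tsum_div]
    have h := Summable.tsum_eq_zero_add (Real.summable_pow_div_factorial x)
    rw [hexps, h]
    simp only [pow_zero, Nat.factorial_zero, Nat.cast_one]
    have hshift : ∑' k : ℕ, x ^ (k+1) / (Nat.factorial (k+1) : ℝ)
        = x * ∑' k : ℕ, x ^ k / (Nat.factorial (k+1) : ℝ) := by
      rw [← tsum_mul_left]
      refine tsum_congr fun k => ?_
      rw [pow_succ']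
      ring
    rw [hshift]
    ring
  have part2 : x * Real.exp (-x) * ∑' j : ℕ, x ^ j / ((Nat.factorial j : ℝ) * (m + j))
      ≤ 1 - Real.exp (-x) := by
    calc x * Real.exp (-x) * ∑' j : ℕ, x ^ j / ((Nat.factorial j : ℝ) * (m + j))
        ≤ x * Real.exp (-x) * ∑' j : ℕ, x ^ j / (Nat.factorial (j+1) : ℝ) := by
          apply mul_le_mul_of_nonneg_left hle (by positivity)
      _ = Real.exp (-x) * (x * ∑' j : ℕ, x ^ j / (Nat.factorial (j+1) : ℝ)) := by ring
      _ = Real.exp (-x) * (Real.exp x - 1) := by rw [hexpsum]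
      _ = 1 - Real.exp (-x) := by
          rw [Real.exp_neg]
          field_simp
  exact ⟨part1, part2, by linarith [Real.exp_pos (-x)]⟩
end

section
/- For every real m > 0 and x ≥ 0, φ_m satisfies the recursion φ_m'(x) = 1/m − (x/m)·φ_{m+1}'(x). -/
open Real MeasureTheory Filter ProbabilityTheory

open Nat

lemma gamma_diff {z : ℝ} (hz : 0 < z) : DifferentiableAt ℝ Real.Gamma z := by
  apply Real.differentiableAt_Gamma
  intro n hn
  have := Nat.cast_nonneg (α := ℝ) n
  rw [hn] at hz; linarith

lemma psi_add_one {y : ℝ} (hy : 0 < y) : psi (y + 1) = psi y + 1 / y := by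
  have hGy := Real.Gamma_pos_of_pos hy
  have h1 : HasDerivAt Real.Gamma (deriv Real.Gamma y) y := (gamma_diff hy).hasDerivAt
  have h2 : HasDerivAt (fun z : ℝ => Real.Gamma (z + 1)) (deriv Real.Gamma (y + 1)) y := by
    have := ((gamma_diff (by linarith : (0:ℝ) < y + 1)).hasDerivAt).comp y
      ((hasDerivAt_id y).add_const 1)
    simpa [Function.comp_def] using this
  have h3 : HasDerivAt (fun z : ℝ => z * Real.Gamma z)
      (1 * Real.Gamma y + y * deriv Real.Gamma y) y := (hasDerivAt_id y).mul h1
  have hEq : (fun z : ℝ => Real.Gamma (z + 1)) =ᶠ[nhds y] fun z => z * Real.Gamma z := by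
    filter_upwards [eventually_gt_nhds hy] with z hz
    exact Real.Gamma_add_one hz.ne'
  have h4 : HasDerivAt (fun z : ℝ => Real.Gamma (z + 1))
      (1 * Real.Gamma y + y * deriv Real.Gamma y) y := h3.congr_of_eventuallyEq hEq
  have hder : deriv Real.Gamma (y + 1) = Real.Gamma y + y * deriv Real.Gamma y := by
    have := h2.unique h4; linarith
  have hGy1 : Real.Gamma (y + 1) = y * Real.Gamma y := Real.Gamma_add_one hy.ne'
  rw [psi, psi, hder, hGy1]
  field_simp
  ring

lemma summable_mul_pow_div_factorial (y : ℝ) :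
    Summable (fun j : ℕ => (j : ℝ) * y ^ j / j !) := by
  rw [← summable_nat_add_iff 1]
  have h : (fun j : ℕ => ((j + 1 : ℕ) : ℝ) * y ^ (j + 1) / (j + 1)!) =
      fun j : ℕ => y * (y ^ j / j !) := by
    funext j
    have hfac : ((j + 1)! : ℝ) = ((j : ℝ) + 1) * (j ! : ℝ) := by
      push_cast [Nat.factorial_succ]; ring
    have hj : ((j : ℝ) + 1) ≠ 0 := by positivity
    have hjf : (j ! : ℝ) ≠ 0 := by positivity
    rw [hfac, pow_succ]
    push_cast
    field_simp
  rw [h]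
  exact (Real.summable_pow_div_factorial y).mul_left y

lemma summable_aux_s3 (x C D : ℝ) (b : ℕ → ℝ) (hb : ∀ j, |b j| ≤ C + D * j) :
    Summable (fun j : ℕ => x ^ j / j ! * b j) := by
  have h1 : Summable (fun j : ℕ => |x| ^ j / j ! * C + D * ((j : ℝ) * |x| ^ j / j !)) :=
    ((Real.summable_pow_div_factorial |x|).mul_right C).add
      ((summable_mul_pow_div_factorial |x|).mul_left D)
  apply Summable.of_norm_bounded h1
  intro j
  have h2 : ‖x ^ j / j ! * b j‖ = |x| ^ j / j ! * |b j| := by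
    rw [norm_mul, norm_div, norm_pow]
    simp [abs_of_nonneg (by positivity : (0:ℝ) ≤ (j ! : ℝ))]
  rw [h2]
  have h3 : |x| ^ j / j ! * |b j| ≤ |x| ^ j / j ! * (C + D * j) :=
    mul_le_mul_of_nonneg_left (hb j) (by positivity)
  calc |x| ^ j / j ! * |b j| ≤ |x| ^ j / j ! * (C + D * j) := h3
    _ = |x| ^ j / j ! * C + D * ((j : ℝ) * |x| ^ j / j !) := by ring

lemma psi_rec_s3 (m : ℝ) (hm : 0 < m) (j : ℕ) :
    psi ((j + 1 : ℕ) + m) = psi (j + m) + 1 / (j + m) := by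
  have hjm : (0:ℝ) < (j : ℝ) + m := by positivity
  have h := psi_add_one hjm
  have hcast : ((j + 1 : ℕ) : ℝ) + m = ((j : ℝ) + m) + 1 := by push_cast; ring
  rw [hcast, h]

lemma psi_bound (m : ℝ) (hm : 0 < m) (j : ℕ) :
    |psi (j + m)| ≤ |psi m| + (1 / m) * j := by
  induction j with
  | zero => simp
  | succ n ih =>
    rw [psi_rec_s3 m hm n]
    have h1 : (0:ℝ) < (n : ℝ) + m := by positivity
    have h2 : 1 / ((n : ℝ) + m) ≤ 1 / m := by
      apply one_div_le_one_div_of_le hm; linarith [Nat.cast_nonneg (α := ℝ) n]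
    have h3 : |psi ((n:ℝ) + m) + 1 / ((n:ℝ) + m)| ≤ |psi ((n:ℝ) + m)| + 1 / ((n:ℝ) + m) := by
      calc _ ≤ |psi ((n:ℝ) + m)| + |1 / ((n:ℝ) + m)| := abs_add_le _ _
        _ = _ := by
            have habs : |1 / ((n:ℝ) + m)| = 1 / ((n:ℝ) + m) := abs_of_pos (by positivity)
            rw [habs]
    push_cast
    calc |psi ((n:ℝ) + m) + 1 / ((n:ℝ) + m)| ≤ |psi ((n:ℝ) + m)| + 1 / ((n:ℝ) + m) := h3
      _ ≤ (|psi m| + (1 / m) * n) + 1 / m := add_le_add ih h2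
      _ = |psi m| + (1 / m) * ((n:ℝ) + 1) := by ring

lemma f_hasDerivAt (m : ℝ) (hm : 0 < m) (x : ℝ) :
    HasDerivAt (fun y : ℝ => ∑' j : ℕ, y ^ j / (j ! : ℝ) * psi (j + m))
      (∑' j : ℕ, x ^ j / (j ! : ℝ) * psi ((j + 1 : ℕ) + m)) x := by
  set C := |psi m| with hC
  set D := (1 : ℝ) / m with hD
  have hD0 : 0 ≤ D := by rw [hD]; positivity
  have hC0 : 0 ≤ C := abs_nonneg _
  set R := |x| + 1 with hR
  have hR1 : (0:ℝ) ≤ R := by positivity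
  set t : Set ℝ := Set.Ioo (-R) R with ht
  have hxt : x ∈ t := by
    constructor
    · have := neg_abs_le x; simp only [hR]; linarith
    · have := le_abs_self x; simp only [hR]; linarith
  set u : ℕ → ℝ := fun j => (j : ℝ) * R ^ (j - 1) / (j ! : ℝ) * (C + D * j) with hu_def
  have hu : Summable u := by
    rw [hu_def, ← summable_nat_add_iff 1]
    have heq : (fun j : ℕ => ((j + 1 : ℕ) : ℝ) * R ^ ((j + 1) - 1) / ((j + 1)! : ℝ) *
        (C + D * (j + 1 : ℕ))) = fun j : ℕ => R ^ j / (j ! : ℝ) * ((C + D) + D * j) := by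
      funext j
      have hfac : (((j + 1)!) : ℝ) = ((j : ℝ) + 1) * (j ! : ℝ) := by
        push_cast [Nat.factorial_succ]; ring
      have hj : ((j : ℝ) + 1) ≠ 0 := by positivity
      have hjf : ((j ! : ℕ) : ℝ) ≠ 0 := by positivity
      simp only [Nat.add_sub_cancel]
      rw [hfac]
      push_cast
      field_simp
      ring
    rw [heq]
    exact summable_aux_s3 R (C + D) D _ (fun j => by
      rw [abs_of_nonneg (by positivity)])
  have hg : ∀ (j : ℕ) (y : ℝ), y ∈ t →
      HasDerivAt (fun z : ℝ => z ^ j / (j ! : ℝ) * psi (j + m))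
        ((j : ℝ) * y ^ (j - 1) / (j ! : ℝ) * psi (j + m)) y := by
    intro j y _
    exact ((hasDerivAt_pow j y).div_const (j ! : ℝ)).mul_const (psi (j + m))
  have hg' : ∀ (j : ℕ) (y : ℝ), y ∈ t →
      ‖(j : ℝ) * y ^ (j - 1) / (j ! : ℝ) * psi (j + m)‖ ≤ u j := by
    intro j y hy
    have hyR : |y| ≤ R := le_of_lt (abs_lt.mpr ⟨hy.1, hy.2⟩)
    have h1 : ‖(j : ℝ) * y ^ (j - 1) / (j ! : ℝ) * psi (j + m)‖ =
        (j : ℝ) * |y| ^ (j - 1) / (j ! : ℝ) * |psi (j + m)| := by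
      rw [Real.norm_eq_abs, abs_mul, abs_div, abs_mul, abs_pow]
      congr 2
      · congr 1 <;> simp
      · simp
    rw [h1]
    show (j : ℝ) * |y| ^ (j - 1) / (j ! : ℝ) * |psi (j + m)| ≤
      (j : ℝ) * R ^ (j - 1) / (j ! : ℝ) * (C + D * j)
    gcongr
    all_goals first
      | exact hyR
      | exact psi_bound m hm j
      | positivity
  have hg0 : Summable (fun j : ℕ => x ^ j / (j ! : ℝ) * psi (j + m)) :=
    summable_aux_s3 x C D _ (psi_bound m hm)
  have key := hasDerivAt_tsum_of_isPreconnected hu isOpen_Ioo (convex_Ioo _ _).isPreconnected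
    hg hg' hxt hg0 hxt
  have hsum' : Summable (fun j : ℕ => (j : ℝ) * x ^ (j - 1) / (j ! : ℝ) * psi (j + m)) :=
    Summable.of_norm_bounded hu (fun j => hg' j x hxt)
  have hshift : ∑' j : ℕ, (j : ℝ) * x ^ (j - 1) / (j ! : ℝ) * psi (j + m) =
      ∑' j : ℕ, x ^ j / (j ! : ℝ) * psi ((j + 1 : ℕ) + m) := by
    rw [Summable.tsum_eq_zero_add hsum']
    simp only [Nat.cast_zero, zero_mul, zero_div, zero_add]
    congr 1
    funext j
    have hfac : (((j + 1)!) : ℝ) = ((j : ℝ) + 1) * (j ! : ℝ) := by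
      push_cast [Nat.factorial_succ]; ring
    have hj : ((j : ℝ) + 1) ≠ 0 := by positivity
    have hjf : ((j ! : ℕ) : ℝ) ≠ 0 := by positivity
    simp only [Nat.add_sub_cancel]
    rw [hfac]
    push_cast
    field_simp
  rw [← hshift]
  exact key

lemma fact_cast (j : ℕ) : (((j + 1)!) : ℝ) = ((j : ℝ) + 1) * (j ! : ℝ) := by
  push_cast [Nat.factorial_succ]; ring

lemma phi_hasDerivAt (m : ℝ) (hm : 0 < m) (x : ℝ) :
    HasDerivAt (phi m) (Real.exp (-x) * ∑' j : ℕ, x ^ j / ((j ! : ℝ) * (j + m))) x := by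
  have hf := f_hasDerivAt m hm x
  have hexp : HasDerivAt (fun y : ℝ => Real.exp (-y)) (-Real.exp (-x)) x := by
    have := (Real.hasDerivAt_exp (-x)).comp x (hasDerivAt_neg x)
    simpa [Function.comp_def] using this
  have hmul := hexp.mul hf
  have hA : Summable (fun j : ℕ => x ^ j / (j ! : ℝ) * psi ((j + 1 : ℕ) + m)) := by
    apply summable_aux_s3 x (|psi m| + 1 / m) (1 / m)
    intro j
    have := psi_bound m hm (j + 1)
    push_cast at this ⊢
    linarith
  have hB : Summable (fun j : ℕ => x ^ j / (j ! : ℝ) * psi (j + m)) :=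
    summable_aux_s3 x (|psi m|) (1 / m) _ (psi_bound m hm)
  have hdiff : ∑' j : ℕ, x ^ j / ((j ! : ℝ) * (j + m)) =
      (∑' j : ℕ, x ^ j / (j ! : ℝ) * psi ((j + 1 : ℕ) + m)) -
      ∑' j : ℕ, x ^ j / (j ! : ℝ) * psi (j + m) := by
    rw [← Summable.tsum_sub hA hB]
    congr 1
    funext j
    rw [psi_rec_s3 m hm j]
    have hjm : ((j : ℝ) + m) ≠ 0 := by positivity
    have hjf : ((j ! : ℕ) : ℝ) ≠ 0 := by positivity
    field_simp
    ring
  have : HasDerivAt (phi m)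
      (-Real.exp (-x) * (∑' j : ℕ, x ^ j / (j ! : ℝ) * psi (j + m)) +
        Real.exp (-x) * ∑' j : ℕ, x ^ j / (j ! : ℝ) * psi ((j + 1 : ℕ) + m)) x := hmul
  convert this using 1
  rw [hdiff]
  ring

theorem stmt3 (m : ℝ) (hm : 0 < m) (x : ℝ) (hx : 0 ≤ x) :
    deriv (phi m) x = 1 / m - (x / m) * deriv (phi (m + 1)) x := by
  have hm1 : (0:ℝ) < m + 1 := by linarith
  rw [(phi_hasDerivAt m hm x).deriv, (phi_hasDerivAt (m + 1) hm1 x).deriv]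
  set Tm := ∑' j : ℕ, x ^ j / ((j ! : ℝ) * (j + m)) with hTm_def
  set Tm1 := ∑' j : ℕ, x ^ j / ((j ! : ℝ) * (j + (m + 1))) with hTm1_def
  -- summabilities
  have hform : ∀ (c : ℝ), (fun j : ℕ => x ^ j / ((j ! : ℝ) * ((j : ℝ) + c))) =
      fun j : ℕ => x ^ j / (j ! : ℝ) * (1 / ((j : ℝ) + c)) := by
    intro c; funext j; rw [div_mul_eq_div_mul_one_div]
  have hsumT : ∀ (c : ℝ), 0 < c → Summable (fun j : ℕ => x ^ j / ((j ! : ℝ) * ((j : ℝ) + c))) := by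
    intro c hc
    rw [hform c]
    apply summable_aux_s3 x (1 / c) 0
    intro j
    have h1 : (0:ℝ) < (j : ℝ) + c := by positivity
    rw [abs_of_pos (by positivity)]
    have : 1 / ((j : ℝ) + c) ≤ 1 / c := by
      apply one_div_le_one_div_of_le hc; linarith [Nat.cast_nonneg (α := ℝ) j]
    linarith
  have hsum_exp : Summable (fun j : ℕ => x ^ j / (j ! : ℝ)) := Real.summable_pow_div_factorial x
  have hexp_tsum : ∑' j : ℕ, x ^ j / (j ! : ℝ) = Real.exp x := by
    rw [Real.exp_eq_exp_ℝ, NormedSpace.exp_eq_tsum_div]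
  -- the c series
  have hc_sum : Summable (fun j : ℕ => (j : ℝ) * x ^ j / ((j ! : ℝ) * ((j : ℝ) + m))) := by
    have heq : (fun j : ℕ => (j : ℝ) * x ^ j / ((j ! : ℝ) * ((j : ℝ) + m))) =
        fun j : ℕ => x ^ j / (j ! : ℝ) * ((j : ℝ) / ((j : ℝ) + m)) := by
      funext j
      have hjm : ((j : ℝ) + m) ≠ 0 := by positivity
      have hjf : ((j ! : ℕ) : ℝ) ≠ 0 := by positivity
      field_simp
    rw [heq]
    apply summable_aux_s3 x 1 0
    intro j
    have h1 : (0:ℝ) < (j : ℝ) + m := by positivity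
    rw [abs_of_nonneg (by positivity)]
    rw [div_le_iff₀ h1]
    linarith [Nat.cast_nonneg (α := ℝ) j]
  have hkey : Real.exp x - m * Tm = x * Tm1 := by
    have h1 : ∑' j : ℕ, (x ^ j / (j ! : ℝ) - m * (x ^ j / ((j ! : ℝ) * ((j : ℝ) + m)))) =
        Real.exp x - m * Tm := by
      rw [Summable.tsum_sub hsum_exp ((hsumT m hm).mul_left m), hexp_tsum, tsum_mul_left]
    have h2 : ∀ j : ℕ, x ^ j / (j ! : ℝ) - m * (x ^ j / ((j ! : ℝ) * ((j : ℝ) + m))) =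
        (j : ℝ) * x ^ j / ((j ! : ℝ) * ((j : ℝ) + m)) := by
      intro j
      have hjm : ((j : ℝ) + m) ≠ 0 := by positivity
      have hjf : ((j ! : ℕ) : ℝ) ≠ 0 := by positivity
      field_simp
      ring
    have h3 : ∑' j : ℕ, (j : ℝ) * x ^ j / ((j ! : ℝ) * ((j : ℝ) + m)) = x * Tm1 := by
      rw [Summable.tsum_eq_zero_add hc_sum]
      simp only [Nat.cast_zero, zero_mul, zero_div, zero_add]
      rw [hTm1_def, ← tsum_mul_left]
      congr 1
      funext j
      have hfac := fact_cast j
      have hj : ((j : ℝ) + 1) ≠ 0 := by positivity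
      have hjm : ((j : ℝ) + 1 + m) ≠ 0 := by positivity
      have hjm' : ((j : ℝ) + (m + 1)) ≠ 0 := by positivity
      have hjf : ((j ! : ℕ) : ℝ) ≠ 0 := by positivity
      push_cast [hfac]
      rw [pow_succ]
      field_simp
      ring
    rw [← h1]
    rw [← h3]
    congr 1
    funext j
    exact h2 j
  have h3 : Real.exp (-x) * Real.exp x = 1 := by rw [← Real.exp_add]; simp
  have h4 : m * (Real.exp (-x) * Tm) = 1 - x * (Real.exp (-x) * Tm1) := by
    calc m * (Real.exp (-x) * Tm) = Real.exp (-x) * (m * Tm) := by ring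
      _ = Real.exp (-x) * (Real.exp x - x * Tm1) := by rw [show m * Tm = Real.exp x - x * Tm1 by linarith]
      _ = Real.exp (-x) * Real.exp x - x * (Real.exp (-x) * Tm1) := by ring
      _ = 1 - x * (Real.exp (-x) * Tm1) := by rw [h3]
  field_simp
  linarith
end
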